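/- Let ν be a sigma-finite measure on (0,∞) with ∫₀^∞ min(x^{-1/2}, x^{-3/2}) ν(dx) < ∞. Then for every τ > 0, ∫₀^∞ √((1 - 2e^{-τx}(τx+1)(1 - τx e^{-τx}) + e^{-2τx})/x³) ν(dx) < ∞, and moreover the integrand satisfies the pointwise bound √((1 - 2e^{-τx}(1+τx) + 2τx e^{-2τx}(1+τx) + e^{-2τx})/(4x³)) ≤ √2 · max(τ,1) · min(x^{-1/2}, x^{-3/2}). -/
import Mathlib

open Real MeasureTheory

lemma numer_bd (τ x : ℝ) (hτ : 0 < τ) (hx : 0 < x) :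
    1 - 2 * Real.exp (-(τ * x)) * (1 + τ * x) +
        2 * τ * x * Real.exp (-(2 * τ * x)) * (1 + τ * x) + Real.exp (-(2 * τ * x)) ≤
      min 2 (2 * (τ * x) ^ 2) := by
  set u := τ * x with hu
  have hu0 : 0 < u := mul_pos hτ hx
  have hexp2 : Real.exp (-(2 * τ * x)) = Real.exp (-u) ^ 2 := by
    rw [sq, ← Real.exp_add, hu]; congr 1; ring
  set E := Real.exp (-u) with hE
  have hE0 : 0 < E := Real.exp_pos _
  have hE1 : E ≤ 1 := by rw [hE, Real.exp_le_one_iff]; linarith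
  have h1 : (1 + u) * E ≤ 1 := by
    have := Real.add_one_le_exp u
    have h' : (1 + u) * E ≤ Real.exp u * E := by nlinarith
    rw [hE, ← Real.exp_add] at h'
    simpa using h'
  have h2 : 1 - u ^ 2 ≤ (1 + u) * E := by
    have := Real.add_one_le_exp (-u)
    nlinarith
  have h3 : u * E ≤ 1 := by
    have := Real.add_one_le_exp u
    nlinarith
  have hNid : 1 - 2 * E * (1 + u) + 2 * τ * x * (E ^ 2) * (1 + u) + E ^ 2 =
      (1 - (1 + u) * E) ^ 2 + (u * E) ^ 2 := by rw [hu]; ring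
  rw [hexp2, hNid]
  have ha0 : 0 ≤ 1 - (1 + u) * E := by linarith
  have ha2 : 1 - (1 + u) * E ≤ u ^ 2 := by linarith
  have ha1 : 1 - (1 + u) * E ≤ 1 := by nlinarith
  have ht1 : (1 - (1 + u) * E) ^ 2 ≤ 1 := by nlinarith
  have ht2 : (u * E) ^ 2 ≤ 1 := by nlinarith
  rcases le_total u 1 with hc | hc
  · have ht1' : (1 - (1 + u) * E) ^ 2 ≤ u ^ 2 := by nlinarith
    have ht2' : (u * E) ^ 2 ≤ u ^ 2 := by nlinarith
    exact le_min (by linarith) (by linarith)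
  · exact le_min (by linarith) (by nlinarith)

lemma ptwise (τ : ℝ) (hτ : 0 < τ) (x : ℝ) (hx : 0 < x) :
    Real.sqrt ((1 - 2 * Real.exp (-(τ * x)) * (1 + τ * x) +
          2 * τ * x * Real.exp (-(2 * τ * x)) * (1 + τ * x) +
          Real.exp (-(2 * τ * x))) / (4 * x ^ 3)) ≤
      Real.sqrt 2 * max τ 1 * min (x ^ (-(1 / 2) : ℝ)) (x ^ (-(3 / 2) : ℝ)) := by
  set M := max τ 1 with hM
  have hM1 : (1 : ℝ) ≤ M := le_max_right _ _
  have hMτ : τ ≤ M := le_max_left _ _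
  have hM0 : (0 : ℝ) < M := lt_of_lt_of_le one_pos hM1
  set m := min (x ^ (-(1 / 2) : ℝ)) (x ^ (-(3 / 2) : ℝ)) with hm
  have hm0 : 0 ≤ m := le_min (Real.rpow_nonneg hx.le _) (Real.rpow_nonneg hx.le _)
  have hR0 : 0 ≤ Real.sqrt 2 * M * m := by positivity
  have hN := numer_bd τ x hτ hx
  have hsq : (Real.sqrt 2 * M * m) ^ 2 = 2 * M ^ 2 * m ^ 2 := by
    rw [mul_pow, mul_pow, Real.sq_sqrt (by norm_num : (0:ℝ) ≤ 2)]
  have hkey : (1 - 2 * Real.exp (-(τ * x)) * (1 + τ * x) +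
          2 * τ * x * Real.exp (-(2 * τ * x)) * (1 + τ * x) +
          Real.exp (-(2 * τ * x))) / (4 * x ^ 3) ≤ (Real.sqrt 2 * M * m) ^ 2 := by
    rw [hsq]
    rcases le_total x 1 with hx1 | hx1
    · have hmeq : m = x ^ (-(1 / 2) : ℝ) := min_eq_left
        (Real.rpow_le_rpow_of_exponent_ge hx hx1 (by norm_num))
      have hm2 : m ^ 2 = x⁻¹ := by
        rw [hmeq, ← Real.rpow_natCast (x ^ (-(1 / 2) : ℝ)) 2, ← Real.rpow_mul hx.le]
        norm_num [Real.rpow_neg_one]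
      rw [hm2, div_le_iff₀ (by positivity)]
      have h8 : 2 * M ^ 2 * x⁻¹ * (4 * x ^ 3) = 8 * M ^ 2 * x ^ 2 := by
        field_simp; ring
      rw [h8]
      have h1 := le_trans hN (min_le_right (2:ℝ) (2 * (τ * x) ^ 2))
      have hτ2 : τ ^ 2 ≤ M ^ 2 := by nlinarith
      nlinarith [mul_nonneg (sub_nonneg.mpr hτ2) (sq_nonneg x)]
    · have hmeq : m = x ^ (-(3 / 2) : ℝ) := min_eq_right
        (Real.rpow_le_rpow_of_exponent_le hx1 (by norm_num))
      have hm2 : m ^ 2 = (x ^ 3)⁻¹ := by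
        rw [hmeq, ← Real.rpow_natCast (x ^ (-(3 / 2) : ℝ)) 2, ← Real.rpow_mul hx.le,
          show (-(3 / 2) * ((2:ℕ):ℝ) : ℝ) = -((3:ℕ):ℝ) by push_cast; ring,
          Real.rpow_neg hx.le, Real.rpow_natCast]
      rw [hm2, div_le_iff₀ (by positivity)]
      have h8 : 2 * M ^ 2 * (x ^ 3)⁻¹ * (4 * x ^ 3) = 8 * M ^ 2 := by
        field_simp; ring
      rw [h8]
      have := min_le_left (2:ℝ) (2 * (τ * x) ^ 2)
      nlinarith
  calc Real.sqrt _ ≤ Real.sqrt ((Real.sqrt 2 * M * m) ^ 2) := Real.sqrt_le_sqrt hkey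
    _ = Real.sqrt 2 * M * m := Real.sqrt_sq hR0

theorem stmt_12 (ν : Measure ℝ) [SigmaFinite ν]
    (h : ∫⁻ x in Set.Ioi (0 : ℝ),
        ENNReal.ofReal (min (x ^ (-(1 / 2) : ℝ)) (x ^ (-(3 / 2) : ℝ))) ∂ν < ⊤) :
    ∀ τ > (0 : ℝ),
      (∫⁻ x in Set.Ioi (0 : ℝ),
        ENNReal.ofReal
          (Real.sqrt ((1 - 2 * Real.exp (-(τ * x)) * (τ * x + 1) *
              (1 - τ * x * Real.exp (-(τ * x))) + Real.exp (-(2 * τ * x))) / x ^ 3)) ∂ν < ⊤) ∧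
      ∀ x > (0 : ℝ),
        Real.sqrt ((1 - 2 * Real.exp (-(τ * x)) * (1 + τ * x) +
              2 * τ * x * Real.exp (-(2 * τ * x)) * (1 + τ * x) +
              Real.exp (-(2 * τ * x))) / (4 * x ^ 3)) ≤
          Real.sqrt 2 * max τ 1 * min (x ^ (-(1 / 2) : ℝ)) (x ^ (-(3 / 2) : ℝ)) := by
  intro τ hτ
  refine ⟨?_, fun x hx => ptwise τ hτ x hx⟩
  have hC0 : (0:ℝ) ≤ 2 * (Real.sqrt 2 * max τ 1) := by positivity
  have hmono : (∫⁻ x in Set.Ioi (0:ℝ),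
      ENNReal.ofReal
        (Real.sqrt ((1 - 2 * Real.exp (-(τ * x)) * (τ * x + 1) *
            (1 - τ * x * Real.exp (-(τ * x))) + Real.exp (-(2 * τ * x))) / x ^ 3)) ∂ν) ≤
      ∫⁻ x in Set.Ioi (0:ℝ), ENNReal.ofReal (2 * (Real.sqrt 2 * max τ 1)) *
        ENNReal.ofReal (min (x ^ (-(1 / 2) : ℝ)) (x ^ (-(3 / 2) : ℝ))) ∂ν := by
    refine lintegral_mono_ae ?_
    filter_upwards [ae_restrict_mem measurableSet_Ioi] with x hx
    have hx0 : (0:ℝ) < x := hx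
    have hpt := ptwise τ hτ x hx0
    have hexp2 : Real.exp (-(2 * τ * x)) = Real.exp (-(τ * x)) ^ 2 := by
      rw [sq, ← Real.exp_add]; congr 1; ring
    have harg : (1 - 2 * Real.exp (-(τ * x)) * (τ * x + 1) *
            (1 - τ * x * Real.exp (-(τ * x))) + Real.exp (-(2 * τ * x))) / x ^ 3
        = 4 * ((1 - 2 * Real.exp (-(τ * x)) * (1 + τ * x) +
            2 * τ * x * Real.exp (-(2 * τ * x)) * (1 + τ * x) +
            Real.exp (-(2 * τ * x))) / (4 * x ^ 3)) := by
      rw [hexp2]; field_simp; ring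
    rw [← ENNReal.ofReal_mul hC0]
    apply ENNReal.ofReal_le_ofReal
    have h4 : Real.sqrt 4 = 2 := by
      rw [show (4:ℝ) = 2 ^ 2 by norm_num, Real.sqrt_sq (by norm_num : (0:ℝ) ≤ 2)]
    calc Real.sqrt ((1 - 2 * Real.exp (-(τ * x)) * (τ * x + 1) *
            (1 - τ * x * Real.exp (-(τ * x))) + Real.exp (-(2 * τ * x))) / x ^ 3)
        = 2 * Real.sqrt ((1 - 2 * Real.exp (-(τ * x)) * (1 + τ * x) +
            2 * τ * x * Real.exp (-(2 * τ * x)) * (1 + τ * x) +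
            Real.exp (-(2 * τ * x))) / (4 * x ^ 3)) := by
          rw [harg, Real.sqrt_mul (by norm_num : (0:ℝ) ≤ 4), h4]
      _ ≤ 2 * (Real.sqrt 2 * max τ 1 *
            min (x ^ (-(1 / 2) : ℝ)) (x ^ (-(3 / 2) : ℝ))) := by linarith
      _ = 2 * (Real.sqrt 2 * max τ 1) *
            min (x ^ (-(1 / 2) : ℝ)) (x ^ (-(3 / 2) : ℝ)) := by ring
  rw [lintegral_const_mul' _ _ ENNReal.ofReal_ne_top] at hmono
  exact lt_of_le_of_lt hmono (ENNReal.mul_lt_top ENNReal.ofReal_lt_top h)
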